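/- Let d ≥ 2, δ ∈ (0,d), h* > 0, and define h_x = h* for x = 0 and h_x = h*/|x|₁^δ for x ≠ 0. Then there is a constant c₅ > 0, depending only on d, δ, h*, such that for every nonempty finite subset Λ ⊂ ℤ^d one has ∑_{x ∈ Λ} h_x ≤ c₅ · |Λ|^{1 - δ/d}. -/

import Mathlib

open Finset

set_option maxHeartbeats 1000000

private lemma powSumBound (a : ℝ) (ha : -1 < a) (M : ℕ) :
    ∑ k ∈ Finset.range M, ((k : ℝ) + 1) ^ a ≤ (1 + 1/(a+1)) * (M:ℝ)^(a+1) := by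
  have ha1 : 0 < a + 1 := by linarith
  have hcoef : (1:ℝ) ≤ 1 + 1/(a+1) := by
    have : 0 < 1/(a+1) := by positivity
    linarith
  rcases Nat.eq_zero_or_pos M with hM | hM
  · subst hM
    simp [Real.zero_rpow (by linarith : a + 1 ≠ 0)]
  rcases le_or_gt 0 a with ha0 | ha0
  · -- monotone case: each term ≤ M^a
    have hMpos : (0:ℝ) < M := by exact_mod_cast hM
    calc ∑ k ∈ Finset.range M, ((k : ℝ) + 1) ^ a
        ≤ ∑ _k ∈ Finset.range M, (M:ℝ)^a := by
          apply Finset.sum_le_sum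
          intro k hk
          apply Real.rpow_le_rpow (by positivity) _ ha0
          have := Finset.mem_range.1 hk
          exact_mod_cast Nat.succ_le_of_lt this
      _ = (M:ℝ) * (M:ℝ)^a := by rw [Finset.sum_const, Finset.card_range]; ring
      _ = (M:ℝ)^(a+1) := by
          rw [Real.rpow_add hMpos, Real.rpow_one]; ring
      _ ≤ (1 + 1/(a+1)) * (M:ℝ)^(a+1) := by nlinarith [Real.rpow_nonneg (le_of_lt hMpos) (a+1)]
  · -- antitone case, use integral comparison
    obtain ⟨m, rfl⟩ : ∃ m, M = m + 1 := ⟨M - 1, by omega⟩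
    have hstep : ∑ k ∈ Finset.range (m+1), ((k : ℝ) + 1) ^ a
        = (∑ i ∈ Finset.range m, (((i+1:ℕ) : ℝ) + 1) ^ a) + 1 := by
      rw [Finset.sum_range_succ']
      simp [Real.one_rpow]
    have hanti : AntitoneOn (fun x : ℝ => x ^ a) (Set.Icc (1:ℝ) (1 + m)) := by
      intro x hx y hy hxy
      exact Real.rpow_le_rpow_of_nonpos (lt_of_lt_of_le one_pos hx.1) hxy ha0.le
    have hint := hanti.sum_le_integral
    have hval : ∫ x in (1:ℝ)..(1 + m), x ^ a = ((1+(m:ℝ))^(a+1) - 1)/(a+1) := by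
      rw [integral_rpow (Or.inl ha)]
      simp [Real.one_rpow]
    have hsum2 : (∑ i ∈ Finset.range m, (((i+1:ℕ) : ℝ) + 1) ^ a)
        ≤ ((1+(m:ℝ))^(a+1) - 1)/(a+1) := by
      rw [← hval]
      refine le_trans (le_of_eq ?_) hint
      apply Finset.sum_congr rfl
      intro i _
      push_cast
      ring_nf
    have hMcast : ((m+1:ℕ):ℝ) = 1 + (m:ℝ) := by push_cast; ring
    have hrge1 : (1:ℝ) ≤ (1+(m:ℝ))^(a+1) := by
      apply Real.one_le_rpow (by linarith [Nat.cast_nonneg (α := ℝ) m]) ha1.le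
    rw [hstep, hMcast]
    calc (∑ i ∈ Finset.range m, (((i+1:ℕ) : ℝ) + 1) ^ a) + 1
        ≤ ((1+(m:ℝ))^(a+1) - 1)/(a+1) + 1 := by linarith
      _ ≤ (1+(m:ℝ))^(a+1)/(a+1) + (1+(m:ℝ))^(a+1) := by
          have h1 : ((1+(m:ℝ))^(a+1) - 1)/(a+1) ≤ (1+(m:ℝ))^(a+1)/(a+1) := by
            gcongr
            linarith
          linarith
      _ = (1 + 1/(a+1)) * (1+(m:ℝ))^(a+1) := by ring

private lemma shellCard (d : ℕ) (hd : 1 ≤ d) (K k : ℕ) (hk : 1 ≤ k) :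
    (((Fintype.piFinset fun _ : Fin d => Finset.Icc (-(K:ℤ)) (K:ℤ))).filter
        (fun x => ∑ i, (x i).natAbs = k)).card ≤ 2 * (2*k+1)^(d-1) := by
  haveI : NeZero d := ⟨by omega⟩
  set i₀ : Fin d := ⟨0, by omega⟩ with hi₀
  set S := (((Fintype.piFinset fun _ : Fin d => Finset.Icc (-(K:ℤ)) (K:ℤ))).filter
      (fun x => ∑ i, (x i).natAbs = k)) with hS
  set T := (Fintype.piFinset fun i : Fin d =>
      if i = i₀ then ({0} : Finset ℤ) else Finset.Icc (-(k:ℤ)) (k:ℤ)) ×ˢ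
      (Finset.univ : Finset Bool) with hT
  have hmem : ∀ x ∈ S, (∀ i, (x i).natAbs ≤ k) := by
    intro x hx i
    rw [hS, Finset.mem_filter] at hx
    rw [← hx.2]
    exact Finset.single_le_sum (f := fun j => (x j).natAbs) (fun j _ => Nat.zero_le _)
      (Finset.mem_univ i)
  have hcard : S.card ≤ T.card := by
    apply Finset.card_le_card_of_injOn
      (fun x => (Function.update x i₀ 0, decide (0 ≤ x i₀)))
    · intro x hx
      rw [Finset.mem_coe] at hx
      rw [hT, Finset.mem_coe, Finset.mem_product]
      constructor
      · rw [Fintype.mem_piFinset]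
        intro i
        show Function.update x i₀ 0 i ∈ _
        by_cases h : i = i₀
        · subst h; simp [Function.update_self]
        · rw [Function.update_of_ne h]
          simp only [if_neg h, Finset.mem_Icc]
          have := hmem x hx i
          omega
      · exact Finset.mem_univ _
    · intro x hx y hy hxy
      simp only [Prod.mk.injEq] at hxy
      obtain ⟨h1, h2⟩ := hxy
      rw [Finset.mem_coe] at hx hy
      have hrest : ∀ i, i ≠ i₀ → x i = y i := by
        intro i hi
        have := congrFun h1 i
        rwa [Function.update_of_ne hi, Function.update_of_ne hi] at this
      have hsx : (x i₀).natAbs + ∑ i ∈ Finset.univ.erase i₀, (x i).natAbs = k := by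
        rw [Finset.mem_filter] at hx
        rw [← hx.2, ← Finset.add_sum_erase _ _ (Finset.mem_univ i₀)]
      have hsy : (y i₀).natAbs + ∑ i ∈ Finset.univ.erase i₀, (y i).natAbs = k := by
        rw [Finset.mem_filter] at hy
        rw [← hy.2, ← Finset.add_sum_erase _ _ (Finset.mem_univ i₀)]
      have hsum_eq : ∑ i ∈ Finset.univ.erase i₀, (x i).natAbs
          = ∑ i ∈ Finset.univ.erase i₀, (y i).natAbs := by
        apply Finset.sum_congr rfl
        intro i hi
        rw [hrest i (Finset.ne_of_mem_erase hi)]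
      have habs : (x i₀).natAbs = (y i₀).natAbs := by omega
      have hsgn : (0 ≤ x i₀) ↔ (0 ≤ y i₀) := by
        constructor <;> intro h <;> [skip; skip] <;> simp_all [decide_eq_decide] 
      have h0 : x i₀ = y i₀ := by omega
      funext i
      by_cases h : i = i₀
      · subst h; exact h0
      · exact hrest i h
  have hTcard : T.card = 2 * (2*k+1)^(d-1) := by
    rw [hT, Finset.card_product, Fintype.card_piFinset]
    have : ∀ i : Fin d, (if i = i₀ then ({0} : Finset ℤ) else Finset.Icc (-(k:ℤ)) (k:ℤ)).card
        = if i = i₀ then 1 else (2*k+1) := by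
      intro i
      by_cases h : i = i₀ <;> simp [h, Int.card_Icc] <;> omega
    rw [Finset.prod_congr rfl (fun i _ => this i)]
    rw [← Finset.mul_prod_erase _ _ (Finset.mem_univ i₀), if_pos rfl]
    have h2 : ∀ i ∈ Finset.univ.erase i₀, (if i = i₀ then 1 else 2*k+1) = 2*k+1 := by
      intro i hi
      rw [if_neg (Finset.ne_of_mem_erase hi)]
    rw [Finset.prod_congr rfl h2, Finset.prod_const,
      Finset.card_erase_of_mem (Finset.mem_univ i₀)]
    simp [Fintype.card_fin]
    ring
  omega

section Helpers
variable (d : ℕ)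

private def Nf (x : Fin d → ℤ) : ℕ := ∑ i, (x i).natAbs

private lemma Nf_eq_zero {d : ℕ} {x : Fin d → ℤ} (h : Nf d x = 0) : x = 0 := by
  funext i
  have := Finset.sum_eq_zero_iff.1 h i (Finset.mem_univ i)
  simpa [Int.natAbs_eq_zero] using this

private lemma natAbs_le_Nf {d : ℕ} (x : Fin d → ℤ) (i : Fin d) : (x i).natAbs ≤ Nf d x :=
  Finset.single_le_sum (f := fun j => (x j).natAbs) (fun j _ => Nat.zero_le _) (Finset.mem_univ i)

end Helpers

/-- For d ≥ 2, 0 < δ < d, h* > 0 and the decaying field h_x = h*/|x|₁^δ (h₀ = h*),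
    there is c₅ > 0 with ∑_{x ∈ Λ} h_x ≤ c₅ |Λ|^{1-δ/d} for all nonempty finite Λ. -/
theorem field_sum_bound (d : ℕ) (hd : 2 ≤ d) (δ hstar : ℝ)
    (hδ0 : 0 < δ) (hδd : δ < d) (hh : 0 < hstar) :
    ∃ c₅ : ℝ, 0 < c₅ ∧
      ∀ Λ : Finset (Fin d → ℤ), Λ.Nonempty →
        (∑ x ∈ Λ, if x = 0 then hstar else hstar / (∑ i, (|x i| : ℝ)) ^ δ) ≤
          c₅ * (Λ.card : ℝ) ^ (1 - δ / d) := by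
  have hd1 : 1 ≤ d := by omega
  have hdR : (1:ℝ) ≤ (d:ℝ) := by exact_mod_cast hd1
  have hdδ : (0:ℝ) < (d:ℝ) - δ := by
    have : δ < (d:ℝ) := hδd
    linarith
  set a : ℝ := (d:ℝ) - 1 - δ with ha_def
  have ha : -1 < a := by simp only [ha_def]; linarith
  have ha1 : a + 1 = (d:ℝ) - δ := by ring
  set c₅ : ℝ := 2*hstar + 2*3^(d-1)*hstar*(1+1/((d:ℝ)-δ))*(d:ℝ)^(d:ℝ)*2^(d:ℝ) with hc₅
  refine ⟨c₅, by positivity, ?_⟩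
  intro Λ hΛ
  set H : (Fin d → ℤ) → ℝ := fun x => if x = 0 then hstar else hstar / (Nf d x : ℝ)^δ with hH
  have hH0 : ∀ x, 0 ≤ H x := by
    intro x
    simp only [hH]
    split
    · exact hh.le
    · positivity
  have hre : ∀ x : Fin d → ℤ, (if x = 0 then hstar else hstar / (∑ i, (|x i| : ℝ)) ^ δ) = H x := by
    intro x
    have hx : (∑ i, (|x i| : ℝ)) = ((Nf d x : ℕ) : ℝ) := by
      show (∑ i, (|x i| : ℝ)) = ((∑ i, (x i).natAbs : ℕ) : ℝ)
      push_cast [Nat.cast_natAbs]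
      rfl
    simp only [hH]
    rw [hx]
  rw [Finset.sum_congr rfl (fun x _ => hre x)]
  set n := Λ.card with hn
  have hn1 : 1 ≤ n := Finset.card_pos.2 hΛ
  have hnR : (1:ℝ) ≤ (n:ℝ) := by exact_mod_cast hn1
  have hn0 : (0:ℝ) < (n:ℝ) := by linarith
  set t : ℝ := (n:ℝ) ^ ((d:ℝ)⁻¹) with ht_def
  have ht1 : (1:ℝ) ≤ t := Real.one_le_rpow hnR (by positivity)
  have ht0 : (0:ℝ) < t := by linarith
  set K : ℕ := ⌈t⌉₊ with hK_def
  have hK1 : 1 ≤ K := Nat.one_le_iff_ne_zero.2 (by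
    have : 0 < K := Nat.ceil_pos.2 ht0
    omega)
  have htK : t ≤ (K:ℝ) := Nat.le_ceil t
  have hK2t : (K:ℝ) ≤ 2*t := by
    have := Nat.ceil_lt_add_one ht0.le
    linarith
  -- the target power
  set P : ℝ := (n:ℝ) ^ (1 - δ/(d:ℝ)) with hP
  have hP1 : (1:ℝ) ≤ P := by
    apply Real.one_le_rpow hnR
    rw [sub_nonneg, div_le_one (by linarith)]
    linarith
  have htpow : t ^ ((d:ℝ) - δ) = P := by
    rw [ht_def, hP, ← Real.rpow_mul hn0.le]
    congr 1
    field_simp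
  have htδ : t^δ = (n:ℝ)^(δ/(d:ℝ)) := by
    rw [ht_def, ← Real.rpow_mul hn0.le]
    congr 1
    ring
  have hnP : (n:ℝ) / t^δ = P := by
    rw [hP, Real.rpow_sub hn0, Real.rpow_one, htδ]
  -- split Λ into small and large Nf
  rw [← Finset.sum_filter_add_sum_filter_not Λ (fun x => Nf d x ≤ K)]
  -- big part
  have hbig : ∑ x ∈ Λ.filter (fun x => ¬ Nf d x ≤ K), H x ≤ hstar * P := by
    have hterm : ∀ x ∈ Λ.filter (fun x => ¬ Nf d x ≤ K), H x ≤ hstar / t^δ := by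
      intro x hx
      have hxK : K < Nf d x := by
        have := (Finset.mem_filter.1 hx).2
        omega
      have hx0 : x ≠ 0 := by
        intro h
        subst h
        have h0 : Nf d (0 : Fin d → ℤ) = 0 := by simp [Nf]
        omega
      simp only [hH, if_neg hx0]
      apply div_le_div_of_nonneg_left hh.le (Real.rpow_pos_of_pos ht0 δ)
      apply Real.rpow_le_rpow ht0.le _ hδ0.le
      calc t ≤ (K:ℝ) := htK
        _ ≤ (Nf d x : ℝ) := by exact_mod_cast hxK.le
    calc ∑ x ∈ Λ.filter (fun x => ¬ Nf d x ≤ K), H x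
        ≤ ∑ _x ∈ Λ.filter (fun x => ¬ Nf d x ≤ K), hstar / t^δ := Finset.sum_le_sum hterm
      _ = ((Λ.filter (fun x => ¬ Nf d x ≤ K)).card : ℝ) * (hstar / t^δ) := by
          rw [Finset.sum_const, nsmul_eq_mul]
      _ ≤ (n:ℝ) * (hstar / t^δ) := by
          apply mul_le_mul_of_nonneg_right _ (by positivity)
          exact_mod_cast Finset.card_filter_le Λ _
      _ = hstar * ((n:ℝ) / t^δ) := by ring
      _ = hstar * P := by rw [hnP]
  -- small part
  set coef : ℝ := 2*3^(d-1)*hstar*(1+1/((d:ℝ)-δ))*(d:ℝ)^(d:ℝ)*2^(d:ℝ) with hcoef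
  have hsmall : ∑ x ∈ Λ.filter (fun x => Nf d x ≤ K), H x ≤ hstar * P + coef * P := by
    set B := Fintype.piFinset fun _ : Fin d => Finset.Icc (-(K:ℤ)) (K:ℤ) with hB
    have hsub : Λ.filter (fun x => Nf d x ≤ K) ⊆ B := by
      intro x hx
      have hxK := (Finset.mem_filter.1 hx).2
      rw [hB, Fintype.mem_piFinset]
      intro i
      have := natAbs_le_Nf x i
      rw [Finset.mem_Icc]
      omega
    have h1 : ∑ x ∈ Λ.filter (fun x => Nf d x ≤ K), H x ≤ ∑ x ∈ B, H x :=
      Finset.sum_le_sum_of_subset_of_nonneg hsub (fun x _ _ => hH0 x)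
    have hmaps : ∀ x ∈ B, Nf d x ∈ Finset.range (d*K+1) := by
      intro x hx
      rw [Finset.mem_range]
      have hle : Nf d x ≤ d * K := by
        calc Nf d x ≤ ∑ _i : Fin d, K := by
              apply Finset.sum_le_sum
              intro i _
              have := Fintype.mem_piFinset.1 hx i
              rw [Finset.mem_Icc] at this
              omega
          _ = d * K := by simp [Finset.sum_const, Finset.card_univ, mul_comm]
      omega
    have hfib := Finset.sum_fiberwise_of_maps_to hmaps H
    rw [← hfib] at h1
    -- k = 0 fiber
    have hg0 : (∑ x ∈ B.filter (fun x => Nf d x = 0), H x) ≤ hstar := by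
      have hsub0 : B.filter (fun x => Nf d x = 0) ⊆ {0} := by
        intro x hx
        rw [Finset.mem_singleton]
        exact Nf_eq_zero (Finset.mem_filter.1 hx).2
      calc ∑ x ∈ B.filter (fun x => Nf d x = 0), H x
          ≤ ∑ x ∈ ({0} : Finset (Fin d → ℤ)), H x :=
            Finset.sum_le_sum_of_subset_of_nonneg hsub0 (fun x _ _ => hH0 x)
        _ = hstar := by simp [hH]
    -- k = j+1 fibers
    have hgk : ∀ j : ℕ, (∑ x ∈ B.filter (fun x => Nf d x = j+1), H x)
        ≤ 2*3^(d-1)*hstar * ((j:ℝ)+1)^a := by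
      intro j
      have hcard : (B.filter (fun x => Nf d x = j+1)).card ≤ 2*3^(d-1)*(j+1)^(d-1) := by
        calc (B.filter (fun x => Nf d x = j+1)).card
            ≤ 2*(2*(j+1)+1)^(d-1) := shellCard d hd1 K (j+1) (by omega)
          _ ≤ 2*(3*(j+1))^(d-1) := by
              gcongr
              omega
          _ = 2*3^(d-1)*(j+1)^(d-1) := by rw [mul_pow]; ring
      have hterm : ∀ x ∈ B.filter (fun x => Nf d x = j+1), H x = hstar / ((j:ℝ)+1)^δ := by
        intro x hx
        have hxk := (Finset.mem_filter.1 hx).2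
        have hx0 : x ≠ 0 := by
          intro h
          subst h
          simp [Nf] at hxk
        simp only [hH, if_neg hx0, hxk]
        norm_num
      rw [Finset.sum_congr rfl hterm, Finset.sum_const, nsmul_eq_mul]
      have hkpos : (0:ℝ) < (j:ℝ)+1 := by positivity
      have hcastd : ((d-1:ℕ):ℝ) = (d:ℝ) - 1 := by
        push_cast [Nat.cast_sub hd1]
        ring
      have hpow : ((j:ℝ)+1)^(d-1:ℕ) / ((j:ℝ)+1)^δ = ((j:ℝ)+1)^a := by
        rw [← Real.rpow_natCast ((j:ℝ)+1) (d-1), ← Real.rpow_sub hkpos, hcastd, ha_def]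
      calc ((B.filter (fun x => Nf d x = j+1)).card : ℝ) * (hstar / ((j:ℝ)+1)^δ)
          ≤ (2*3^(d-1)*((j:ℝ)+1)^(d-1:ℕ)) * (hstar / ((j:ℝ)+1)^δ) := by
            apply mul_le_mul_of_nonneg_right _ (by positivity)
            calc ((B.filter (fun x => Nf d x = j+1)).card : ℝ)
                  ≤ ((2*3^(d-1)*(j+1)^(d-1) : ℕ) : ℝ) := by exact_mod_cast hcard
                _ = 2*3^(d-1)*((j:ℝ)+1)^(d-1:ℕ) := by push_cast; ring
        _ = 2*3^(d-1)*hstar * (((j:ℝ)+1)^(d-1:ℕ) / ((j:ℝ)+1)^δ) := by ring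
        _ = 2*3^(d-1)*hstar * ((j:ℝ)+1)^a := by rw [hpow]
    -- sum over fibers
    have hsumk : ∑ k ∈ Finset.range (d*K+1), (∑ x ∈ B.filter (fun x => Nf d x = k), H x)
        ≤ hstar + 2*3^(d-1)*hstar * ((1+1/(a+1)) * ((d*K:ℕ):ℝ)^(a+1)) := by
      rw [Finset.sum_range_succ']
      have h2 : ∑ j ∈ Finset.range (d*K), (∑ x ∈ B.filter (fun x => Nf d x = j+1), H x)
          ≤ ∑ j ∈ Finset.range (d*K), 2*3^(d-1)*hstar * ((j:ℝ)+1)^a :=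
        Finset.sum_le_sum (fun j _ => hgk j)
      have h3 : ∑ j ∈ Finset.range (d*K), 2*3^(d-1)*hstar * ((j:ℝ)+1)^a
          = 2*3^(d-1)*hstar * ∑ j ∈ Finset.range (d*K), ((j:ℝ)+1)^a := by
        rw [Finset.mul_sum]
      have h4 := powSumBound a ha (d*K)
      have h5 : (0:ℝ) ≤ 2*3^(d-1)*hstar := by positivity
      have h6 := mul_le_mul_of_nonneg_left h4 h5
      rw [h3] at h2
      linarith
    -- bound (d*K)^(a+1)
    have hdK : ((d*K:ℕ):ℝ)^(a+1) ≤ (d:ℝ)^(d:ℝ) * (2^(d:ℝ) * P) := by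
      have hcast : ((d*K:ℕ):ℝ) = (d:ℝ)*(K:ℝ) := by push_cast; ring
      have hKpos : (0:ℝ) ≤ (K:ℝ) := by positivity
      rw [hcast, Real.mul_rpow (by linarith) hKpos]
      have hd' : (d:ℝ)^(a+1) ≤ (d:ℝ)^(d:ℝ) := by
        apply Real.rpow_le_rpow_of_exponent_le hdR
        rw [ha1]
        linarith
      have hK' : (K:ℝ)^(a+1) ≤ 2^(d:ℝ) * P := by
        calc (K:ℝ)^(a+1) ≤ (2*t)^(a+1) :=
              Real.rpow_le_rpow hKpos hK2t (by linarith)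
          _ = 2^(a+1) * t^(a+1) := Real.mul_rpow (by norm_num) ht0.le
          _ ≤ 2^(d:ℝ) * P := by
              have h2' : (2:ℝ)^(a+1) ≤ 2^(d:ℝ) :=
                Real.rpow_le_rpow_of_exponent_le one_le_two (by rw [ha1]; linarith)
              have h3' : t^(a+1) = P := by rw [ha1]; exact htpow
              rw [h3']
              exact mul_le_mul_of_nonneg_right h2' (by linarith)
      exact mul_le_mul hd' hK' (by positivity) (by positivity)
    -- assemble small part
    have hA : (0:ℝ) ≤ 2*3^(d-1)*hstar * (1+1/(a+1)) := by
      have : (0:ℝ) < a + 1 := by linarith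
      positivity
    have h7 := mul_le_mul_of_nonneg_left hdK hA
    have h8 : hstar ≤ hstar * P := by nlinarith
    have h9 : 1/(a+1) = 1/((d:ℝ)-δ) := by rw [ha1]
    have h10 : 2*3^(d-1)*hstar * (1+1/(a+1)) * ((d:ℝ)^(d:ℝ) * (2^(d:ℝ) * P)) = coef * P := by
      rw [h9, hcoef]
      ring
    rw [h10] at h7
    calc ∑ x ∈ Λ.filter (fun x => Nf d x ≤ K), H x
        ≤ ∑ k ∈ Finset.range (d*K+1), (∑ x ∈ B.filter (fun x => Nf d x = k), H x) := h1
      _ ≤ hstar + 2*3^(d-1)*hstar * ((1+1/(a+1)) * ((d*K:ℕ):ℝ)^(a+1)) := hsumk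
      _ ≤ hstar * P + coef * P := by nlinarith
  have hfinal : c₅ * P = 2*hstar*P + coef*P := by rw [hc₅, hcoef]; ring
  calc (∑ x ∈ Λ.filter (fun x => Nf d x ≤ K), H x)
        + ∑ x ∈ Λ.filter (fun x => ¬ Nf d x ≤ K), H x
      ≤ (hstar * P + coef * P) + hstar * P := add_le_add hsmall hbig
    _ ≤ c₅ * P := le_of_eq (by rw [hfinal]; ring)
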